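/- Let X be a countable set with a metric d, M the multiplication operator (M f)(x) = e^{μ d(x, y₀)} f(x) for fixed y₀ ∈ X and μ > 0, and H a self-adjoint operator on ℓ²(X) whose matrix elements H(x,x') vanish unless d(x,x') ≤ 1, with |H(x,x')| ≤ 1 for x ≠ x' and each x having at most 2n neighbors at distance 1. Then ‖M H M^{-1} − H‖ ≤ 2n(e^{μ} − 1). -/

import Mathlib

open scoped ENNReal

noncomputable def delta {X : Type*} [DecidableEq X] (x : X) : lp (fun _ : X => ℂ) 2 :=
  lp.single 2 x 1

theorem stmt7 {X : Type*} [MetricSpace X] [Countable X] [DecidableEq X]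
    (n : ℕ) (μ : ℝ) (hμ : 0 < μ) (y₀ : X)
    (H B : lp (fun _ : X => ℂ) 2 →L[ℂ] lp (fun _ : X => ℂ) 2)
    (hH : IsSelfAdjoint H)
    (hloc : ∀ x x' : X, 1 < dist x x' → (inner ℂ (delta x) (H (delta x')) : ℂ) = 0)
    (hbd : ∀ x x' : X, x ≠ x' → ‖(inner ℂ (delta x) (H (delta x')) : ℂ)‖ ≤ 1)
    (hfin : ∀ x : X, ({x' : X | x' ≠ x ∧ dist x x' ≤ 1}).Finite)
    (hnb : ∀ x : X, ({x' : X | x' ≠ x ∧ dist x x' ≤ 1}).ncard ≤ 2 * n)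
    (hB : ∀ x x' : X, (inner ℂ (delta x) (B (delta x')) : ℂ)
        = ((Real.exp (μ * (dist x y₀ - dist x' y₀)) - 1 : ℝ) : ℂ)
            * (inner ℂ (delta x) (H (delta x')) : ℂ)) :
    ‖B‖ ≤ 2 * n * (Real.exp μ - 1) := by
  classical
  set c : ℝ := Real.exp μ - 1 with hcdef
  have hc0 : 0 ≤ c := by
    have h := Real.one_le_exp hμ.le
    simp only [hcdef]; linarith
  -- bound on the conjugation factor
  have hfac : ∀ x x' : X, dist x x' ≤ 1 →
      |Real.exp (μ * (dist x y₀ - dist x' y₀)) - 1| ≤ c := by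
    intro x x' hd
    have h1 : |dist x y₀ - dist x' y₀| ≤ 1 := le_trans (abs_dist_sub_le x x' y₀) hd
    rw [abs_le] at h1
    have h2 : Real.exp (-μ) ≤ Real.exp (μ * (dist x y₀ - dist x' y₀)) := by
      apply Real.exp_le_exp.2; nlinarith [h1.1]
    have h3 : Real.exp (μ * (dist x y₀ - dist x' y₀)) ≤ Real.exp μ := by
      apply Real.exp_le_exp.2; nlinarith [h1.2]
    have h4 : 2 ≤ Real.exp μ + Real.exp (-μ) := by
      nlinarith [Real.add_one_le_exp μ, Real.add_one_le_exp (-μ)]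
    rw [abs_le]
    constructor <;> simp only [hcdef] <;> linarith
  -- matrix entries of B
  set a : X → X → ℂ := fun x x' => inner ℂ (delta x) (B (delta x')) with hadef
  have hazero : ∀ x x', x' ∉ (hfin x).toFinset → a x x' = 0 := by
    intro x x' hx'
    simp only [Set.Finite.mem_toFinset, Set.mem_setOf_eq, not_and_or, not_le,
      not_ne_iff] at hx'
    rcases hx' with rfl | hd
    · simp only [hadef]
      rw [hB]
      simp
    · simp only [hadef]
      rw [hB, hloc x x' hd, mul_zero]
  have habd : ∀ x x', ‖a x x'‖ ≤ c := by
    intro x x'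
    by_cases hx' : x' ∈ (hfin x).toFinset
    · simp only [Set.Finite.mem_toFinset, Set.mem_setOf_eq] at hx'
      simp only [hadef]
      rw [hB, norm_mul]
      have hb1 := hbd x x' (Ne.symm hx'.1)
      have h2 : ‖((Real.exp (μ * (dist x y₀ - dist x' y₀)) - 1 : ℝ) : ℂ)‖ ≤ c := by
        rw [Complex.norm_real, Real.norm_eq_abs]
        exact hfac x x' hx'.2
      calc ‖((Real.exp (μ * (dist x y₀ - dist x' y₀)) - 1 : ℝ) : ℂ)‖ *
            ‖(inner ℂ (delta x) (H (delta x')) : ℂ)‖ ≤ c * 1 :=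
          mul_le_mul h2 hb1 (norm_nonneg _) hc0
        _ = c := mul_one c
    · rw [hazero x x' hx']
      simpa using hc0
  -- pointwise formula for B f
  have hdelta_smul : ∀ (z : ℂ) (x : X), lp.single 2 x z = z • delta x := by
    intro z x
    have h := lp.single_smul (E := fun _ : X => ℂ) 2 x z (1 : ℂ)
    rw [delta, ← h, smul_eq_mul, mul_one]
  have hBf : ∀ (f : lp (fun _ : X => ℂ) 2) (x : X),
      (B f) x = ∑ x' ∈ (hfin x).toFinset, f x' * a x x' := by
    intro f x
    have h1 : HasSum (fun x' : X => lp.single 2 x' (f x')) f :=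
      lp.hasSum_single (by norm_num) f
    have h2 : HasSum (fun x' : X => (innerSL ℂ (delta x)) (B (lp.single 2 x' (f x'))))
        ((innerSL ℂ (delta x)) (B f)) := (h1.mapL B).mapL (innerSL ℂ (delta x))
    have h3 : ∀ x' : X, (innerSL ℂ (delta x)) (B (lp.single 2 x' (f x'))) = f x' * a x x' := by
      intro x'
      rw [hdelta_smul (f x') x', map_smul]
      simp only [innerSL_apply_apply, inner_smul_right, hadef]
    rw [funext h3] at h2
    have h4 : (innerSL ℂ (delta x)) (B f) = (B f) x := by
      simp only [innerSL_apply_apply, delta]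
      rw [lp.inner_single_left]
      simp [RCLike.inner_apply]
    rw [h4] at h2
    refine h2.unique (hasSum_sum_of_ne_finset_zero ?_)
    intro x' hx'
    rw [hazero x x' hx', mul_zero]
  -- main estimate
  have h2n : ∀ x : X, ((hfin x).toFinset.card : ℝ) ≤ (2 * n : ℝ) := by
    intro x
    have := hnb x
    rw [Set.ncard_eq_toFinset_card _ (hfin x)] at this
    exact_mod_cast this
  apply B.opNorm_le_bound (by positivity)
  intro f
  apply lp.norm_le_of_forall_sum_le (p := 2) (by norm_num) (by positivity)
  intro s
  have hexp : (2 : ℝ≥0∞).toReal = (2 : ℝ) := by norm_num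
  simp only [hexp, Real.rpow_two]
  -- pointwise bound
  have step1 : ∀ x : X, ‖(B f) x‖ ^ 2
      ≤ c ^ 2 * (2 * n) * ∑ x' ∈ (hfin x).toFinset, ‖f x'‖ ^ 2 := by
    intro x
    have hb1 : ‖(B f) x‖ ≤ c * ∑ x' ∈ (hfin x).toFinset, ‖f x'‖ := by
      rw [hBf f x]
      refine le_trans (norm_sum_le _ _) ?_
      rw [Finset.mul_sum]
      apply Finset.sum_le_sum
      intro x' _
      rw [norm_mul, mul_comm]
      exact mul_le_mul_of_nonneg_right (habd x x') (norm_nonneg _)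
    have hb2 : (∑ x' ∈ (hfin x).toFinset, ‖f x'‖) ^ 2
        ≤ ((hfin x).toFinset.card : ℝ) * ∑ x' ∈ (hfin x).toFinset, ‖f x'‖ ^ 2 :=
      sq_sum_le_card_mul_sum_sq
    have hsumnn : 0 ≤ ∑ x' ∈ (hfin x).toFinset, ‖f x'‖ :=
      Finset.sum_nonneg fun _ _ => norm_nonneg _
    have hsq : 0 ≤ ∑ x' ∈ (hfin x).toFinset, ‖f x'‖ ^ 2 :=
      Finset.sum_nonneg fun _ _ => sq_nonneg _
    calc ‖(B f) x‖ ^ 2 ≤ (c * ∑ x' ∈ (hfin x).toFinset, ‖f x'‖) ^ 2 := by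
          apply pow_le_pow_left₀ (norm_nonneg _) hb1
      _ = c ^ 2 * (∑ x' ∈ (hfin x).toFinset, ‖f x'‖) ^ 2 := by ring
      _ ≤ c ^ 2 * (((hfin x).toFinset.card : ℝ) * ∑ x' ∈ (hfin x).toFinset, ‖f x'‖ ^ 2) :=
          mul_le_mul_of_nonneg_left hb2 (sq_nonneg c)
      _ ≤ c ^ 2 * ((2 * n : ℝ) * ∑ x' ∈ (hfin x).toFinset, ‖f x'‖ ^ 2) := by
          apply mul_le_mul_of_nonneg_left (mul_le_mul_of_nonneg_right (h2n x) hsq) (sq_nonneg c)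
      _ = c ^ 2 * (2 * n) * ∑ x' ∈ (hfin x).toFinset, ‖f x'‖ ^ 2 := by ring
  -- double sum swap
  set T : Finset X := s.biUnion (fun x => (hfin x).toFinset) with hT
  have step2 : ∑ x ∈ s, ∑ x' ∈ (hfin x).toFinset, ‖f x'‖ ^ 2
      ≤ (2 * n : ℝ) * ‖f‖ ^ 2 := by
    have hsub : ∀ x ∈ s, (hfin x).toFinset ⊆ T := by
      intro x hx
      exact Finset.subset_biUnion_of_mem (fun x => (hfin x).toFinset) hx
    have hswap : ∑ x ∈ s, ∑ x' ∈ (hfin x).toFinset, ‖f x'‖ ^ 2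
        = ∑ x' ∈ T, ∑ x ∈ s, (if x' ∈ (hfin x).toFinset then ‖f x'‖ ^ 2 else 0) := by
      rw [Finset.sum_comm]
      apply Finset.sum_congr rfl
      intro x hx
      rw [Finset.sum_ite_mem T ((hfin x).toFinset) (fun x' => ‖f x'‖ ^ 2),
        Finset.inter_eq_right.2 (hsub x hx)]
    rw [hswap]
    have hcount : ∀ x' : X, ∑ x ∈ s, (if x' ∈ (hfin x).toFinset then ‖f x'‖ ^ 2 else 0)
        ≤ (2 * n : ℝ) * ‖f x'‖ ^ 2 := by
      intro x'
      rw [← Finset.sum_filter, Finset.sum_const, nsmul_eq_mul]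
      have hsubset : s.filter (fun x => x' ∈ (hfin x).toFinset) ⊆ (hfin x').toFinset := by
        intro x hx
        simp only [Finset.mem_filter, Set.Finite.mem_toFinset, Set.mem_setOf_eq] at hx ⊢
        exact ⟨hx.2.1.symm, by rw [dist_comm]; exact hx.2.2⟩
      have hcard : ((s.filter (fun x => x' ∈ (hfin x).toFinset)).card : ℝ) ≤ (2 * n : ℝ) :=
        le_trans (by exact_mod_cast Finset.card_le_card hsubset) (h2n x')
      exact mul_le_mul_of_nonneg_right hcard (sq_nonneg _)
    calc ∑ x' ∈ T, ∑ x ∈ s, (if x' ∈ (hfin x).toFinset then ‖f x'‖ ^ 2 else 0)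
        ≤ ∑ x' ∈ T, (2 * n : ℝ) * ‖f x'‖ ^ 2 := Finset.sum_le_sum fun x' _ => hcount x'
      _ = (2 * n : ℝ) * ∑ x' ∈ T, ‖f x'‖ ^ 2 := by rw [Finset.mul_sum]
      _ ≤ (2 * n : ℝ) * ‖f‖ ^ 2 := by
          apply mul_le_mul_of_nonneg_left _ (by positivity)
          have := lp.sum_rpow_le_norm_rpow (p := 2) (by norm_num) f T
          simpa [hexp, Real.rpow_two] using this
  calc ∑ x ∈ s, ‖(B f) x‖ ^ 2
      ≤ ∑ x ∈ s, c ^ 2 * (2 * n) * ∑ x' ∈ (hfin x).toFinset, ‖f x'‖ ^ 2 :=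
        Finset.sum_le_sum fun x _ => step1 x
    _ = c ^ 2 * (2 * n) * ∑ x ∈ s, ∑ x' ∈ (hfin x).toFinset, ‖f x'‖ ^ 2 := by
        rw [Finset.mul_sum]
    _ ≤ c ^ 2 * (2 * n) * ((2 * n : ℝ) * ‖f‖ ^ 2) := by
        apply mul_le_mul_of_nonneg_left step2 (by positivity)
    _ = (2 * n * c * ‖f‖) ^ 2 := by ring
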